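/- Let 1 ≤ k ≤ n with k ≤ (n+1)/2, and let A ∈ ℂ^{n×n}. Suppose O_k(A) is not contained in any plane through the origin. If F is a face of conv(O_k(A)) with dim F = 2 such that (0,0,0) lies in the relative interior of F and F ⊆ {(t,x,y) ∈ ℝ³ : t + ax + by = 0} for some (a,b) ∈ ℝ², then Λ_k(A) = {a + ib}. -/

import Mathlib

set_option maxHeartbeats 1000000


open Matrix

noncomputable section

/-- The Hermitian real part `(A + Aᴴ)/2` of a complex matrix. -/
def ReM {n : ℕ} (A : Matrix (Fin n) (Fin n) ℂ) : Matrix (Fin n) (Fin n) ℂ :=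
  (2⁻¹ : ℂ) • (A + Aᴴ)

/-- The Hermitian imaginary part `(A - Aᴴ)/(2i)` of a complex matrix. -/
def ImM {n : ℕ} (A : Matrix (Fin n) (Fin n) ℂ) : Matrix (Fin n) (Fin n) ℂ :=
  ((2 * Complex.I)⁻¹ : ℂ) • (A - Aᴴ)

/-- The `k`-th largest eigenvalue (for `1 ≤ k ≤ n`) of a Hermitian `n × n` matrix
(with junk value `0` for non-Hermitian input): the eigenvalues sorted in increasing
order, evaluated at index `n - k`. -/
def kthEig {n : ℕ} (M : Matrix (Fin n) (Fin n) ℂ) (k : ℕ) : ℝ :=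
  if hM : M.IsHermitian then
    if h : n - k < n then (hM.eigenvalues ∘ Tuple.sort hM.eigenvalues) ⟨n - k, h⟩ else 0
  else 0

/-- `λ_k(x,y) = λ_k(x·Re A + y·Im A)`. -/
def lamXY {n : ℕ} (A : Matrix (Fin n) (Fin n) ℂ) (k : ℕ) (x y : ℝ) : ℝ :=
  kthEig ((x : ℂ) • ReM A + (y : ℂ) • ImM A) k

/-- `λ_k(θ) = λ_k(cos θ · Re A + sin θ · Im A)`. -/
def lamTheta {n : ℕ} (A : Matrix (Fin n) (Fin n) ℂ) (k : ℕ) (θ : ℝ) : ℝ :=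
  lamXY A k (Real.cos θ) (Real.sin θ)

/-- The rank-`k` numerical range, via the Li–Sze halfplane description:
`Λ_k(A) = {a + ib : a cos θ + b sin θ ≤ λ_k(θ) for all θ}`. -/
def NumRange {n : ℕ} (A : Matrix (Fin n) (Fin n) ℂ) (k : ℕ) : Set ℂ :=
  {z : ℂ | ∀ θ : ℝ, z.re * Real.cos θ + z.im * Real.sin θ ≤ lamTheta A k θ}

/-- The curve `O_k(A) = {(λ_k(θ), -cos θ, -sin θ)} ⊂ ℝ³`. -/
def OkSet {n : ℕ} (A : Matrix (Fin n) (Fin n) ℂ) (k : ℕ) : Set (Fin 3 → ℝ) :=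
  {v | ∃ θ : ℝ, v = ![lamTheta A k θ, -Real.cos θ, -Real.sin θ]}

/-- Conical hull: all finite nonnegative combinations of elements of `S`
(including the empty combination `0`). -/
def coneHull {V : Type*} [AddCommMonoid V] [Module ℝ V] (S : Set V) : Set V :=
  {x | ∃ (m : ℕ) (c : Fin m → ℝ) (p : Fin m → V),
    (∀ i, 0 ≤ c i) ∧ (∀ i, p i ∈ S) ∧ x = ∑ i, c i • p i}

/-- Dual cone with respect to the standard inner product on `ι → ℝ`. -/
def dualCone {ι : Type*} [Fintype ι] (C : Set (ι → ℝ)) : Set (ι → ℝ) :=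
  {w | ∀ v ∈ C, 0 ≤ ∑ i, w i * v i}

/-- The cone `Ĉ = {(c,a,b) : c ≥ 0 and a cos θ + b sin θ ≤ c λ_k(θ) for all θ}`. -/
def ChatSet {n : ℕ} (A : Matrix (Fin n) (Fin n) ℂ) (k : ℕ) : Set (Fin 3 → ℝ) :=
  {v | 0 ≤ v 0 ∧ ∀ θ : ℝ, v 1 * Real.cos θ + v 2 * Real.sin θ ≤ v 0 * lamTheta A k θ}

/-! ### Auxiliary lemmas -/

section Aux

open Polynomial Finset

theorem aux_monoUnique {m : ℕ} {p q : Fin m → ℝ} (hp : Monotone p) (hq : Monotone q)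
    (h : Multiset.map p Finset.univ.val = Multiset.map q Finset.univ.val) : p = q := by
  have hcoe : ∀ f : Fin m → ℝ, (↑(List.ofFn f) : Multiset ℝ) = Multiset.map f Finset.univ.val := by
    intro f; simp [List.ofFn_eq_map]
  have hperm : (List.ofFn p).Perm (List.ofFn q) := by
    rw [← Multiset.coe_eq_coe, hcoe, hcoe, h]
  have hs : ∀ (f : Fin m → ℝ), Monotone f → (List.ofFn f).Pairwise (· ≤ ·) := by
    intro f hf
    rw [List.pairwise_ofFn]
    intro i j hij; exact hf hij.le
  exact List.ofFn_injective (List.Perm.eq_of_pairwise' (hs p hp) (hs q hq) hperm)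

theorem aux_permMap {m : ℕ} {α : Type*} (e : Equiv.Perm (Fin m)) (f : Fin m → α) :
    Multiset.map (f ∘ ⇑e) Finset.univ.val = Multiset.map f Finset.univ.val := by
  have h1 := congrArg Finset.val (Finset.map_univ_equiv e)
  rw [Finset.map_val] at h1
  simp only [Equiv.coe_toEmbedding] at h1
  conv_rhs => rw [← h1]
  rw [Multiset.map_map]

theorem aux_charpoly_conj_eq {m : ℕ} (U V D : Matrix (Fin m) (Fin m) ℂ)
    (hUV : U * V = 1) (hVU : V * U = 1) : (U * D * V).charpoly = D.charpoly := by
  have key : charmatrix (U * D * V) = (U.map C) * charmatrix D * (V.map C) := by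
    unfold charmatrix
    rw [mul_sub, sub_mul]
    congr 1
    · rw [scalar_apply,
        show (diagonal fun _ : Fin m => (X : ℂ[X])) = (X : ℂ[X]) • (1 : Matrix (Fin m) (Fin m) ℂ[X])
          by rw [smul_eq_diagonal_mul, mul_one],
        mul_smul_comm, smul_mul_assoc, mul_one, ← Matrix.map_mul, hUV]
      simp
    · rw [_root_.map_mul, _root_.map_mul]
      rfl
  unfold Matrix.charpoly
  rw [key, det_mul, det_mul, mul_comm, ← mul_assoc, ← det_mul, ← Matrix.map_mul, hVU]
  simp

theorem aux_charpoly_diag {m : ℕ} (d : Fin m → ℂ) :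
    (diagonal d).charpoly = ∏ i, (X - C (d i)) := by
  rw [charpoly_of_upperTriangular _ (blockTriangular_diagonal d)]
  simp

theorem aux_herm_charpoly {m : ℕ} {M : Matrix (Fin m) (Fin m) ℂ} (hM : M.IsHermitian) :
    M.charpoly = ∏ i, (X - C ((hM.eigenvalues i : ℝ) : ℂ)) := by
  conv_lhs => rw [hM.spectral_theorem, Unitary.conjStarAlgAut_apply]
  rw [aux_charpoly_conj_eq _ _ _ (Matrix.mem_unitaryGroup_iff.mp (hM.eigenvectorUnitary).2)
      (Matrix.mem_unitaryGroup_iff'.mp (hM.eigenvectorUnitary).2), aux_charpoly_diag]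
  rfl

theorem aux_roots_prod {m : ℕ} (c : Fin m → ℂ) :
    (∏ i, (X - C (c i))).roots = Multiset.map c Finset.univ.val := by
  rw [Finset.prod_eq_multiset_prod]
  have h : Multiset.map (fun i => X - C (c i)) Finset.univ.val
      = Multiset.map (fun r => X - C r) (Multiset.map c Finset.univ.val) := by
    rw [Multiset.map_map]; rfl
  rw [h, roots_multiset_prod_X_sub_C]

theorem aux_eig_mset {m : ℕ} {M : Matrix (Fin m) (Fin m) ℂ} (hM : M.IsHermitian)
    (hN : (-M).IsHermitian) :
    Multiset.map hN.eigenvalues Finset.univ.val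
      = Multiset.map (fun i => -hM.eigenvalues i) Finset.univ.val := by
  have hd : (-(diagonal (RCLike.ofReal ∘ hM.eigenvalues)) : Matrix (Fin m) (Fin m) ℂ)
        = diagonal (fun i => ((-hM.eigenvalues i : ℝ) : ℂ)) := by
    ext i j
    rcases eq_or_ne i j with h | h
    · subst h; simp
    · simp [diagonal_apply_ne _ h]
  have h2 : (-M).charpoly = ∏ i, (X - C ((-hM.eigenvalues i : ℝ) : ℂ)) := by
    have h : -M = (hM.eigenvectorUnitary : Matrix (Fin m) (Fin m) ℂ) *
        diagonal (fun i => ((-hM.eigenvalues i : ℝ) : ℂ)) *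
        (star (hM.eigenvectorUnitary : Matrix (Fin m) (Fin m) ℂ)) := by
      conv_lhs => rw [hM.spectral_theorem, Unitary.conjStarAlgAut_apply]
      rw [← hd]
      simp only [Matrix.mul_neg, Matrix.neg_mul]
    rw [h, aux_charpoly_conj_eq _ _ _ (Matrix.mem_unitaryGroup_iff.mp (hM.eigenvectorUnitary).2)
        (Matrix.mem_unitaryGroup_iff'.mp (hM.eigenvectorUnitary).2), aux_charpoly_diag]
  have h1 := aux_herm_charpoly hN
  rw [h2] at h1
  have hr := congrArg Polynomial.roots h1
  rw [aux_roots_prod (fun i => ((hN.eigenvalues i : ℝ) : ℂ)),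
      aux_roots_prod (fun i => ((-hM.eigenvalues i : ℝ) : ℂ))] at hr
  have key : Multiset.map (Complex.ofReal) (Multiset.map hN.eigenvalues Finset.univ.val)
      = Multiset.map (Complex.ofReal)
          (Multiset.map (fun i => -hM.eigenvalues i) Finset.univ.val) := by
    rw [Multiset.map_map, Multiset.map_map]
    simpa only [Function.comp_def] using hr.symm
  exact Multiset.map_injective Complex.ofReal_injective key

theorem aux_kthEig_add_nonneg {m k : ℕ} {M : Matrix (Fin m) (Fin m) ℂ} (hM : M.IsHermitian)
    (hk1 : 1 ≤ k) (hkn : k ≤ m) (hk2 : k - 1 ≤ m - k) :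
    0 ≤ kthEig M k + kthEig (-M) k := by
  have hN : (-M).IsHermitian := hM.neg
  have hlt : m - k < m := by omega
  rw [kthEig, kthEig, dif_pos hM, dif_pos hN, dif_pos hlt, dif_pos hlt]
  set F := hM.eigenvalues ∘ ⇑(Tuple.sort hM.eigenvalues) with hF
  set G := hN.eigenvalues ∘ ⇑(Tuple.sort hN.eigenvalues) with hG
  have hFmono : Monotone F := Tuple.monotone_sort _
  have hGmono : Monotone G := Tuple.monotone_sort _
  set H : Fin m → ℝ := fun i => -F (Fin.rev i) with hH
  have hHmono : Monotone H := by
    intro i j hij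
    simp only [hH, neg_le_neg_iff]
    exact hFmono (Fin.rev_le_rev.mpr hij)
  have hGH : G = H := by
    apply aux_monoUnique hGmono hHmono
    have m1 : Multiset.map G Finset.univ.val = Multiset.map hN.eigenvalues Finset.univ.val :=
      aux_permMap _ _
    have m2 : Multiset.map H Finset.univ.val
        = Multiset.map (fun i => -F i) Finset.univ.val := by
      have := aux_permMap (Fin.revPerm) (fun i => -F i)
      rw [← this]
      congr 1
    have m3 : Multiset.map (fun i => -F i) Finset.univ.val
        = Multiset.map (fun i => -hM.eigenvalues i) Finset.univ.val := by
      have := aux_permMap (Tuple.sort hM.eigenvalues) (fun i => -hM.eigenvalues i)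
      rw [← this]
      rfl
    rw [m1, m2, m3, aux_eig_mset hM hN]
  have hrev : Fin.rev (⟨m - k, hlt⟩ : Fin m) = ⟨k - 1, by omega⟩ := by
    ext
    simp only [Fin.val_rev, Fin.val_mk]
    omega
  have hGval : G ⟨m - k, hlt⟩ = -F ⟨k - 1, by omega⟩ := by rw [hGH, hH]; simp [hrev]
  rw [hGval]
  have hle : F ⟨k - 1, by omega⟩ ≤ F ⟨m - k, hlt⟩ := hFmono (Fin.mk_le_mk.mpr (by omega))
  linarith

theorem aux_ReM_herm {n : ℕ} (A : Matrix (Fin n) (Fin n) ℂ) : (ReM A).IsHermitian := by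
  unfold ReM Matrix.IsHermitian
  rw [conjTranspose_smul, conjTranspose_add, conjTranspose_conjTranspose, add_comm]
  congr 1
  simp

theorem aux_ImM_herm {n : ℕ} (A : Matrix (Fin n) (Fin n) ℂ) : (ImM A).IsHermitian := by
  unfold ImM Matrix.IsHermitian
  rw [conjTranspose_smul, conjTranspose_sub, conjTranspose_conjTranspose]
  have h1 : (star ((2 * Complex.I)⁻¹ : ℂ)) = -(2 * Complex.I)⁻¹ := by
    have h : ((2 * Complex.I)⁻¹ : ℂ) = -(2⁻¹) * Complex.I := by
      rw [mul_inv, Complex.inv_I]; ring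
    rw [h]
    simp [Complex.star_def, Complex.conj_I]
  rw [h1, neg_smul, ← smul_neg, neg_sub]

theorem aux_MXY_herm {n : ℕ} (A : Matrix (Fin n) (Fin n) ℂ) (x y : ℝ) :
    (((x : ℂ)) • ReM A + ((y : ℂ)) • ImM A).IsHermitian := by
  have hs : ∀ (M : Matrix (Fin n) (Fin n) ℂ) (t : ℝ), M.IsHermitian →
      ((t : ℂ) • M).IsHermitian := by
    intro M t hM
    unfold Matrix.IsHermitian
    rw [conjTranspose_smul, hM.eq]
    congr 1
    simp
  exact (hs _ x (aux_ReM_herm A)).add (hs _ y (aux_ImM_herm A))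

theorem aux_lam_add_pi {n k : ℕ} (A : Matrix (Fin n) (Fin n) ℂ) (hk1 : 1 ≤ k) (hkn : k ≤ n)
    (hk2 : k - 1 ≤ n - k) (θ : ℝ) : 0 ≤ lamTheta A k θ + lamTheta A k (θ + Real.pi) := by
  have heq : ((Real.cos (θ + Real.pi) : ℂ)) • ReM A + ((Real.sin (θ + Real.pi) : ℂ)) • ImM A
      = -(((Real.cos θ : ℂ)) • ReM A + ((Real.sin θ : ℂ)) • ImM A) := by
    rw [Real.cos_add_pi, Real.sin_add_pi]
    push_cast
    rw [neg_smul, neg_smul, ← neg_add]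
  rw [lamTheta, lamTheta, lamXY, lamXY, heq]
  exact aux_kthEig_add_nonneg (aux_MXY_herm A _ _) hk1 hkn hk2

/-- The linear functional `v ↦ v 0 + a * v 1 + b * v 2`. -/
def linF (a b : ℝ) : (Fin 3 → ℝ) →ₗ[ℝ] ℝ :=
  LinearMap.proj 0 + a • LinearMap.proj 1 + b • LinearMap.proj 2

lemma linF_apply (a b : ℝ) (v : Fin 3 → ℝ) : linF a b v = v 0 + a * v 1 + b * v 2 := by
  simp [linF]

lemma linF_vec (a b x y z : ℝ) : linF a b ![x, y, z] = x + a * y + b * z := by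
  rw [linF_apply]
  simp

end Aux

/-- Suppose `k ≤ (n+1)/2` and `O_k(A)` is not contained in a plane
through the origin. If `F` is a two-dimensional face of `conv(O_k(A))` whose relative
interior contains `(0,0,0)` and `F ⊆ {t + ax + by = 0}`, then `Λ_k(A) = {a + ib}`. -/
theorem stmt10 {n k : ℕ} (hk1 : 1 ≤ k) (hkn : k ≤ n) (hk2 : (k : ℝ) ≤ (n + 1) / 2)
    (A : Matrix (Fin n) (Fin n) ℂ)
    (hplane : ¬ ∃ w : Fin 3 → ℝ, w ≠ 0 ∧
      ∀ θ : ℝ, w 0 * lamTheta A k θ - w 1 * Real.cos θ - w 2 * Real.sin θ = 0)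
    (F : Set (Fin 3 → ℝ)) (hFconv : Convex ℝ F)
    (hface : IsExtreme ℝ (convexHull ℝ (OkSet A k)) F)
    (hdim : Module.finrank ℝ (affineSpan ℝ F).direction = 2)
    (h0 : (0 : Fin 3 → ℝ) ∈ intrinsicInterior ℝ F)
    (a b : ℝ) (hsub : F ⊆ {v : Fin 3 → ℝ | v 0 + a * v 1 + b * v 2 = 0}) :
    NumRange A k = {(a : ℂ) + b * Complex.I} := by
  have hk2' : k - 1 ≤ n - k := by
    have h2k : (2 * k : ℝ) ≤ n + 1 := by linarith
    have : 2 * k ≤ n + 1 := by exact_mod_cast h2k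
    omega
  set C := convexHull ℝ (OkSet A k) with hC
  set φ := linF a b with hφ
  have keyIneq := aux_lam_add_pi A hk1 hkn hk2'
  -- relative interior ball
  obtain ⟨ε, hε, hball⟩ : ∃ ε > 0, ∀ z : Fin 3 → ℝ, z ∈ affineSpan ℝ F → ‖z‖ < ε → z ∈ F := by
    obtain ⟨y, hy, hy0⟩ := h0
    rw [mem_interior_iff_mem_nhds] at hy
    obtain ⟨ε, hε, hball'⟩ := Metric.mem_nhds_iff.mp hy
    refine ⟨ε, hε, fun z hz hznorm => ?_⟩
    have hmem : (⟨z, hz⟩ : affineSpan ℝ F) ∈ Metric.ball y ε := by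
      rw [Metric.mem_ball, Subtype.dist_eq]
      simpa [hy0, dist_eq_norm] using hznorm
    exact hball' hmem
  have h0F : (0 : Fin 3 → ℝ) ∈ F := intrinsicInterior_subset h0
  have h0span : (0 : Fin 3 → ℝ) ∈ affineSpan ℝ F := subset_affineSpan ℝ F h0F
  -- the direction of `F` equals the kernel of `φ`
  have hdirle : (affineSpan ℝ F).direction ≤ LinearMap.ker φ := by
    rw [direction_affineSpan, vectorSpan_def, Submodule.span_le]
    rintro v ⟨f, hf, g, hg, rfl⟩
    have hf' : f 0 + a * f 1 + b * f 2 = 0 := hsub hf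
    have hg' : g 0 + a * g 1 + b * g 2 = 0 := hsub hg
    simp only [SetLike.mem_coe, LinearMap.mem_ker]
    show φ (f -ᵥ g) = 0
    rw [vsub_eq_sub, map_sub, hφ, linF_apply, linF_apply]
    linarith
  have hker2 : Module.finrank ℝ (LinearMap.ker φ) = 2 := by
    have hr := LinearMap.finrank_range_add_finrank_ker φ
    have hrange : LinearMap.range φ = ⊤ := by
      rw [LinearMap.range_eq_top]
      intro r
      refine ⟨![r, 0, 0], ?_⟩
      rw [hφ, linF_apply]
      simp
    rw [hrange, finrank_top] at hr
    have h3 : Module.finrank ℝ (Fin 3 → ℝ) = 3 := by simp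
    have h1 : Module.finrank ℝ ℝ = 1 := Module.finrank_self ℝ
    omega
  have hdireq : (affineSpan ℝ F).direction = LinearMap.ker φ :=
    Submodule.eq_of_le_of_finrank_le hdirle (by rw [hdim, hker2])
  -- negatives of small multiples of direction vectors are in `F`
  have hFneg : ∀ v : Fin 3 → ℝ, v ∈ (affineSpan ℝ F).direction →
      ∃ c : ℝ, 0 < c ∧ -(c • v) ∈ F := by
    intro v hv
    by_cases hv0 : v = 0
    · exact ⟨1, one_pos, by simpa [hv0] using h0F⟩
    · have hnv : 0 < ‖v‖ := norm_pos_iff.mpr hv0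
      refine ⟨ε / (2 * ‖v‖), by positivity, ?_⟩
      apply hball
      · refine (AffineSubspace.vsub_right_mem_direction_iff_mem h0span _).mp ?_
        rw [vsub_eq_sub, sub_zero]
        exact Submodule.neg_mem _ (Submodule.smul_mem _ _ hv)
      · rw [norm_neg, norm_smul, Real.norm_eq_abs, abs_of_pos (by positivity)]
        have heq2 : ε / (2 * ‖v‖) * ‖v‖ = ε / 2 := by field_simp
        rw [heq2]
        linarith
  -- points of `C` in the plane of `F` are in `F`
  have inF : ∀ v : Fin 3 → ℝ, v ∈ C → φ v = 0 → v ∈ F := by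
    intro v hvC hv0
    have hvdir : v ∈ (affineSpan ℝ F).direction := by
      rw [hdireq]; exact LinearMap.mem_ker.mpr hv0
    obtain ⟨c, hc, hcF⟩ := hFneg v hvdir
    have hseg : (0 : Fin 3 → ℝ) ∈ openSegment ℝ v (-(c • v)) := by
      refine ⟨c / (1 + c), 1 / (1 + c), by positivity, by positivity, by field_simp; ring, ?_⟩
      rw [smul_neg, smul_smul, ← sub_eq_add_neg, ← sub_smul]
      have hsc : c / (1 + c) - 1 / (1 + c) * c = 0 := by field_simp; ring
      rw [hsc, zero_smul]
    exact (hface.2 hvC (hface.1 hcF) h0F hseg)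
  -- Step A : a + bi satisfies all the halfplane inequalities
  have stepA : ∀ θ : ℝ, a * Real.cos θ + b * Real.sin θ ≤ lamTheta A k θ := by
    by_contra hcon
    push_neg at hcon
    obtain ⟨θ₀, hθ₀⟩ := hcon
    set u' : Fin 3 → ℝ := ![lamTheta A k θ₀, -Real.cos θ₀, -Real.sin θ₀] with hu'
    set u : Fin 3 → ℝ := ![lamTheta A k (θ₀ + Real.pi), -Real.cos (θ₀ + Real.pi), -Real.sin (θ₀ + Real.pi)] with hu
    have hu'Ok : u' ∈ OkSet A k := ⟨θ₀, rfl⟩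
    have huOk : u ∈ OkSet A k := ⟨θ₀ + Real.pi, rfl⟩
    have hu'C : u' ∈ C := subset_convexHull ℝ _ hu'Ok
    have huC : u ∈ C := subset_convexHull ℝ _ huOk
    have hφu' : φ u' = lamTheta A k θ₀ - (a * Real.cos θ₀ + b * Real.sin θ₀) := by
      rw [hu', hφ, linF_vec]
      ring
    have hφu : φ u = lamTheta A k (θ₀ + Real.pi) + (a * Real.cos θ₀ + b * Real.sin θ₀) := by
      rw [hu, hφ, linF_vec, Real.cos_add_pi, Real.sin_add_pi]
      ring
    have hneg : φ u' < 0 := by rw [hφu']; linarith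
    have hpos : 0 < φ u := by
      rw [hφu]
      have := keyIneq θ₀
      rw [hφu'] at hneg
      linarith
    set s : ℝ := φ u with hs
    set t : ℝ := -(φ u') with ht
    have hφu't : φ u' = -t := by rw [ht]; ring
    clear_value s t
    have htt : 0 < t := by linarith
    have hst : 0 < s + t := by linarith
    have hsum : t / (s + t) + s / (s + t) = 1 := by
      rw [← add_div, add_comm]
      exact div_self (ne_of_gt hst)
    set q := (t / (s + t)) • u + (s / (s + t)) • u' with hq
    have hqC : q ∈ C := by
      have hconv : Convex ℝ C := convex_convexHull ℝ _
      exact hconv huC hu'C (le_of_lt (div_pos htt hst)) (le_of_lt (div_pos hpos hst)) hsum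
    have hqφ : φ q = 0 := by
      rw [hq, map_add, LinearMap.map_smul, LinearMap.map_smul]
      simp only [smul_eq_mul, ← hs]
      rw [hφu't]
      field_simp
      ring
    have hqF : q ∈ F := inF q hqC hqφ
    have hseg : q ∈ openSegment ℝ u u' :=
      ⟨t / (s + t), s / (s + t), div_pos htt hst, div_pos hpos hst, hsum, rfl⟩
    have huF : u ∈ F := (hface.2 huC hu'C hqF hseg)
    have hcontra : u 0 + a * u 1 + b * u 2 = 0 := hsub huF
    have hφu0 : φ u = 0 := by rw [hφ, linF_apply]; exact hcontra
    rw [← hs] at hφu0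
    linarith
  -- Step B : any member of the numerical range equals a + bi
  ext z
  simp only [Set.mem_singleton_iff]
  constructor
  · intro hz
    have hz' : ∀ θ : ℝ, z.re * Real.cos θ + z.im * Real.sin θ ≤ lamTheta A k θ := hz
    set ψ := linF z.re z.im with hψ
    have hC' : C ⊆ {v | 0 ≤ ψ v} := by
      apply convexHull_min
      · rintro v ⟨θ, rfl⟩
        have hθ := hz' θ
        simp only [Set.mem_setOf_eq, hψ, linF_vec]
        linarith
      · exact convex_halfSpace_ge (LinearMap.isLinear ψ) 0
    have hψF : ∀ f ∈ F, ψ f = 0 := by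
      intro f hf
      have hfdir : f ∈ (affineSpan ℝ F).direction := by
        have hm := AffineSubspace.vsub_mem_direction (subset_affineSpan ℝ F hf) h0span
        rwa [vsub_eq_sub, sub_zero] at hm
      obtain ⟨c, hc, hcF⟩ := hFneg f hfdir
      have h1 : 0 ≤ ψ f := hC' (hface.1 hf)
      have h2 : 0 ≤ ψ (-(c • f)) := hC' (hface.1 hcF)
      rw [map_neg, LinearMap.map_smul] at h2
      simp only [smul_eq_mul] at h2
      nlinarith
    have hkerψ : LinearMap.ker φ ≤ LinearMap.ker ψ := by
      rw [← hdireq, direction_affineSpan, vectorSpan_def, Submodule.span_le]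
      rintro v ⟨f, hf, g, hg, rfl⟩
      simp only [SetLike.mem_coe, LinearMap.mem_ker]
      show ψ (f -ᵥ g) = 0
      rw [vsub_eq_sub, map_sub, hψF f hf, hψF g hg, sub_zero]
    have hu1 : ψ ![-a, 1, 0] = 0 := by
      have hm : ![-a, 1, 0] ∈ LinearMap.ker φ := by
        rw [LinearMap.mem_ker, hφ, linF_vec]
        ring
      exact hkerψ hm
    have hu2 : ψ ![-b, 0, 1] = 0 := by
      have hm : ![-b, 0, 1] ∈ LinearMap.ker φ := by
        rw [LinearMap.mem_ker, hφ, linF_vec]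
        ring
      exact hkerψ hm
    rw [hψ, linF_vec] at hu1 hu2
    apply Complex.ext
    · simp only [Complex.add_re, Complex.ofReal_re, Complex.mul_re, Complex.ofReal_im,
        Complex.I_re, Complex.I_im]
      linarith
    · simp only [Complex.add_im, Complex.ofReal_im, Complex.mul_im, Complex.ofReal_re,
        Complex.I_re, Complex.I_im]
      linarith
  · rintro rfl
    intro θ
    have := stepA θ
    simpa using this


end
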